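/- For any vectors u, v ∈ ℂ^d with v ≠ 0, min_{θ ∈ [0,2π)} ‖u − e^{iθ} v‖ ≤ 2 ‖u u* − v v*‖_F / ‖v‖, where u u* and v v* denote the rank-one Hermitian matrices formed by the outer products. -/

import Mathlib

open MeasureTheory ProbabilityTheory Complex Matrix
open scoped InnerProductSpace ENNReal NNReal

noncomputable section

/-- Borel measurable structure on complex Euclidean space. -/
instance euclideanComplexMeasurableSpace {d : ℕ} :
    MeasurableSpace (EuclideanSpace ℂ (Fin d)) := MeasurableSpace.comap WithLp.ofLp MeasurableSpace.pi

/-- The standard complex Gaussian distribution on `ℂ`: the law of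
`X + i Y` with `X, Y` independent real Gaussians of mean `0` and variance `1/2`. -/
def stdCGaussian : Measure ℂ :=
  ((gaussianReal 0 (1/2)).prod (gaussianReal 0 (1/2))).map
    (fun p => (p.1 : ℂ) + (p.2 : ℂ) * Complex.I)

/-- The standard complex Gaussian distribution on `ℂ^d`
(i.i.d. standard complex Gaussian coordinates). -/
def stdCGaussianVec (d : ℕ) : Measure (EuclideanSpace ℂ (Fin d)) :=
  (Measure.pi (fun _ : Fin d => stdCGaussian)).map
    (⇑(EuclideanSpace.equiv (Fin d) ℂ).symm)

/-- The distance up to a global phase: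
`dist(x, y) = min_{θ} ‖x - e^{iθ} y‖`. -/
def distPhase {d : ℕ} (x y : EuclideanSpace ℂ (Fin d)) : ℝ :=
  ⨅ θ : ℝ, ‖x - Complex.exp (θ * Complex.I) • y‖

/-- The outer product `u v*`. -/
def outerProd {d : ℕ} (u v : EuclideanSpace ℂ (Fin d)) : Matrix (Fin d) (Fin d) ℂ :=
  Matrix.of fun i k => u i * (starRingEnd ℂ) (v k)

/-- The quadratic form `v* M v`. -/
def quadForm {d : ℕ} (M : Matrix (Fin d) (Fin d) ℂ) (v : EuclideanSpace ℂ (Fin d)) : ℂ :=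
  dotProduct (star (fun i => v i)) (M.mulVec (fun i => v i))

/-- The Frobenius norm of a complex matrix. -/
def frobNorm {d : ℕ} (M : Matrix (Fin d) (Fin d) ℂ) : ℝ :=
  Real.sqrt (∑ i, ∑ k, ‖M i k‖^2)

/-- The operator (spectral) norm of a complex matrix. -/
def opNorm {d : ℕ} (M : Matrix (Fin d) (Fin d) ℂ) : ℝ :=
  ‖Matrix.toEuclideanCLM (𝕜 := ℂ) M‖

/-- The ℓ¹-norm of a complex vector. -/
def l1Norm {d : ℕ} (x : EuclideanSpace ℂ (Fin d)) : ℝ := ∑ i, ‖x i‖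

/-- The sup-norm of a real vector. -/
def supNorm {m : ℕ} (η : EuclideanSpace ℝ (Fin m)) : ℝ := ⨆ j, |η j|

/-- The Rademacher distribution on `ℝ`: `±1` with probability `1/2` each. -/
def radMeasure : Measure ℝ :=
  (1/2 : ℝ≥0∞) • Measure.dirac 1 + (1/2 : ℝ≥0∞) • Measure.dirac (-1)

/-- The intensity-based empirical loss `x ↦ ∑ⱼ (|⟨aⱼ, x⟩|² - bⱼ)²`. -/
def intensityLoss {d m : ℕ} (a : Fin m → EuclideanSpace ℂ (Fin d))
    (b : Fin m → ℝ) (x : EuclideanSpace ℂ (Fin d)) : ℝ :=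
  ∑ j, (‖⟪a j, x⟫_ℂ‖^2 - b j)^2


/-- Auxiliary: squared norm as sum of `normSq`. -/
lemma aux_norm_sq_sum {d : ℕ} (u : EuclideanSpace ℂ (Fin d)) :
    ‖u‖^2 = ∑ i, Complex.normSq (u i) := by
  rw [EuclideanSpace.norm_eq, Real.sq_sqrt (by positivity)]
  simp [Complex.sq_norm]

/-- Auxiliary: the inner product as a sum. -/
lemma aux_inner_sum {d : ℕ} (u v : EuclideanSpace ℂ (Fin d)) :
    (inner ℂ u v : ℂ) = ∑ i, (starRingEnd ℂ) (u i) * v i := by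
  simp [PiLp.inner_apply, mul_comm]

/-- Auxiliary: phase alignment. -/
lemma aux_phase (z : ℂ) :
    Complex.exp ((-z.arg : ℝ) * Complex.I) * z = (‖z‖ : ℂ) := by
  have h : z = (‖z‖ : ℂ) * Complex.exp (z.arg * Complex.I) :=
    (Complex.norm_mul_exp_arg_mul_I z).symm
  calc Complex.exp ((-z.arg : ℝ) * Complex.I) * z
      = Complex.exp ((-z.arg : ℝ) * Complex.I)
        * ((‖z‖ : ℂ) * Complex.exp (z.arg * Complex.I)) := by rw [← h]
    _ = (‖z‖ : ℂ)
        * Complex.exp (((-z.arg : ℝ) : ℂ) * Complex.I + (z.arg : ℂ) * Complex.I) := by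
        rw [Complex.exp_add]; ring
    _ = (‖z‖ : ℂ) := by
        rw [show ((-z.arg : ℝ) : ℂ) * Complex.I + (z.arg : ℂ) * Complex.I = 0 by
          push_cast; ring, Complex.exp_zero, mul_one]

/-- Auxiliary: norm of difference after phase alignment. -/
lemma aux_norm_sub_sq {d : ℕ} (u v : EuclideanSpace ℂ (Fin d)) (θ : ℝ)
    (hphase : Complex.exp (θ * Complex.I) * (inner ℂ u v : ℂ)
      = (‖(inner ℂ u v : ℂ)‖ : ℂ)) :
    ‖u - Complex.exp (θ * Complex.I) • v‖ ^ 2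
      = ‖u‖^2 + ‖v‖^2 - 2 * ‖(inner ℂ u v : ℂ)‖ := by
  rw [@norm_sub_sq ℂ]
  have hir : (inner ℂ u (Complex.exp (θ * Complex.I) • v) : ℂ)
      = (‖(inner ℂ u v : ℂ)‖ : ℂ) := by
    rw [inner_smul_right, hphase]
  rw [hir, norm_smul]
  simp [Complex.norm_exp_ofReal_mul_I]
  ring

/-- Auxiliary: entrywise expansion of the outer-product difference. -/
lemma aux_entry {d : ℕ} (u v : EuclideanSpace ℂ (Fin d)) (i k : Fin d) :
    (‖(outerProd u u - outerProd v v) i k‖)^2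
      = Complex.normSq (u i) * Complex.normSq (u k)
        - 2 * ((u i * (starRingEnd ℂ) (v i)) * ((starRingEnd ℂ) (u k) * v k)).re
        + Complex.normSq (v i) * Complex.normSq (v k) := by
  simp only [Matrix.sub_apply, outerProd, Matrix.of_apply, Complex.sq_norm,
    Complex.normSq_sub, Complex.normSq_mul, Complex.normSq_conj, _root_.map_mul, Complex.conj_conj]
  ring_nf

/-- Auxiliary: double-sum identity. -/
lemma aux_double_sum {d : ℕ} (u v : EuclideanSpace ℂ (Fin d)) :
    ∑ i, ∑ k, (Complex.normSq (u i) * Complex.normSq (u k)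
        - 2 * ((u i * (starRingEnd ℂ) (v i)) * ((starRingEnd ℂ) (u k) * v k)).re
        + Complex.normSq (v i) * Complex.normSq (v k))
      = (∑ i, Complex.normSq (u i))^2 + (∑ i, Complex.normSq (v i))^2
        - 2 * Complex.normSq (∑ i, (starRingEnd ℂ) (u i) * v i) := by
  simp only [Finset.sum_add_distrib, Finset.sum_sub_distrib, ← Finset.mul_sum,
    ← Finset.sum_mul, ← Complex.re_sum]
  have hp : ∑ i, u i * (starRingEnd ℂ) (v i)
      = (starRingEnd ℂ) (∑ i, (starRingEnd ℂ) (u i) * v i) := by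
    rw [map_sum]; simp [mul_comm]
  rw [hp]
  have hre : ((starRingEnd ℂ) (∑ i, (starRingEnd ℂ) (u i) * v i) *
      ∑ i, (starRingEnd ℂ) (u i) * v i).re
      = Complex.normSq (∑ i, (starRingEnd ℂ) (u i) * v i) := by
    rw [mul_comm, Complex.mul_conj]; simp
  rw [hre]; ring

/-- Auxiliary: the polynomial inequality. -/
lemma aux_poly (a b t : ℝ) (ht0 : 0 ≤ t) (h4 : t ≤ a*b) :
    (a^2 + b^2 - 2*t) * b^2 ≤ 4*(a^4 + b^4 - 2*t^2) := by
  nlinarith [mul_nonneg (sub_nonneg.mpr h4) ht0, sq_nonneg (a - b), sq_nonneg (a*b - t),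
    sq_nonneg (a^2 - b^2)]

/-- Auxiliary: conclude from squared comparison. -/
lemma aux_sq_div (x F b : ℝ) (hx : 0 ≤ x) (hF : 0 ≤ F) (hb : 0 < b)
    (h : x^2 * b^2 ≤ (2*F)^2) : x ≤ 2 * F / b := by
  rw [le_div_iff₀ hb]
  nlinarith [mul_nonneg hx hb.le]

/-- the distance up to a global phase between two vectors is controlled by
the Frobenius distance of their outer products. -/
theorem distPhase_le_outer_frobenius (d : ℕ) (u v : EuclideanSpace ℂ (Fin d)) (hv : v ≠ 0) :
    distPhase u v ≤ 2 * frobNorm (outerProd u u - outerProd v v) / ‖v‖ := by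
  have hb : (0:ℝ) < ‖v‖ := norm_pos_iff.mpr hv
  set z : ℂ := inner ℂ u v with hz
  have h1 : distPhase u v ≤ ‖u - Complex.exp ((-z.arg : ℝ) * Complex.I) • v‖ := by
    apply ciInf_le
    exact ⟨0, by rintro x ⟨φ, rfl⟩; exact norm_nonneg _⟩
  have h2 : ‖u - Complex.exp ((-z.arg : ℝ) * Complex.I) • v‖ ^ 2
      = ‖u‖^2 + ‖v‖^2 - 2 * ‖z‖ :=
    aux_norm_sub_sq u v _ (aux_phase z)
  have ht0 : 0 ≤ ‖z‖ := norm_nonneg z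
  have h4 : ‖z‖ ≤ ‖u‖ * ‖v‖ := by
    rw [hz]; exact norm_inner_le_norm u v
  have hF0 : 0 ≤ frobNorm (outerProd u u - outerProd v v) := Real.sqrt_nonneg _
  have h3 : frobNorm (outerProd u u - outerProd v v) ^ 2
      = ‖u‖^4 + ‖v‖^4 - 2 * ‖z‖ ^ 2 := by
    rw [frobNorm, Real.sq_sqrt (Finset.sum_nonneg fun i _ => Finset.sum_nonneg fun k _ => sq_nonneg _)]
    rw [Finset.sum_congr rfl fun i _ => Finset.sum_congr rfl fun k _ => aux_entry u v i k,
      aux_double_sum u v, ← aux_norm_sq_sum u, ← aux_norm_sq_sum v]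
    rw [hz, aux_inner_sum u v, ← Complex.sq_norm, ← aux_inner_sum u v, ← hz]
    ring
  have hkey : ‖u - Complex.exp ((-z.arg : ℝ) * Complex.I) • v‖ ^ 2 * ‖v‖^2
      ≤ (2 * frobNorm (outerProd u u - outerProd v v))^2 := by
    rw [h2, mul_pow, h3]
    exact (aux_poly ‖u‖ ‖v‖ (‖z‖) ht0 h4).trans_eq (by ring)
  exact h1.trans (aux_sq_div _ _ _ (norm_nonneg _) hF0 hb hkey)


end
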